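/- Let D be a ring with center C, σ ∈ Aut(D) with σ|_C of finite order m, S_0 = C ∩ Fix(σ), C/S_0 cyclic Galois of degree m with group ⟨σ|_C⟩, and d ∈ D^×. Let τ ∈ Aut_{S_0}(D) commute with σ and let k ∈ C^× satisfy τ(d) = (∏_{l=0}^{m−1} σ^l(k))·d. Then the map H_{τ,k}: (D,σ,d) → (D,σ,d) defined by ∑_{i=0}^{m−1} x_i t^i ↦ τ(x_0) + ∑_{i=1}^{m−1} τ(x_i)(∏_{l=0}^{i−1} σ^l(k)) t^i is an algebra automorphism of (D,σ,d) extending τ. -/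
import Mathlib


open Finset

/-- The multiplication of the Petit algebra `(D,σ,d) = D[t;σ]/D[t;σ](t^m − d)` on
coefficient vectors `Fin m → D`. -/
def pmul {D : Type*} [Ring D] (σ : D ≃+* D) (d : D) (m : ℕ) (a b : Fin m → D) :
    Fin m → D := fun k =>
  ∑ i : Fin m, ∑ j : Fin m,
    if (i : ℕ) + j = k then a i * (σ ^ (i : ℕ)) (b j)
    else if (i : ℕ) + j = (k : ℕ) + m then a i * (σ ^ (i : ℕ)) (b j) * (σ ^ (k : ℕ)) d
    else 0

/-- `C/S₀` is a cyclic Galois extension of degree `m` with group `⟨σ|_C⟩`, where `C` is the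
center of `D` (Chase–Harrison–Rosenberg Galois coordinates). -/
def CenterCyclicGalois {D : Type*} [Ring D] (σ : D ≃+* D) (m : ℕ) : Prop :=
  0 < m ∧ (∀ c ∈ Subring.center D, (σ ^ m) c = c) ∧
    ∀ j < m, ∃ (n : ℕ) (x y : Fin n → D),
      (∀ l, x l ∈ Subring.center D ∧ y l ∈ Subring.center D) ∧
      ∀ i < m, (∑ l, x l * (σ ^ i) (y l)) = if i = j then 1 else 0

section Aux
variable {D : Type*} [Ring D] (σ : D ≃+* D) (k : D)

lemma aux_center_map (c : D) (hc : c ∈ Subring.center D) : σ c ∈ Subring.center D := by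
  rw [Subring.mem_center_iff] at *
  intro g
  calc g * σ c = σ (σ.symm g * c) := by simp
    _ = σ (c * σ.symm g) := by rw [hc (σ.symm g)]
    _ = σ c * g := by simp

lemma aux_center_pow (n : ℕ) (c : D) (hc : c ∈ Subring.center D) :
    (σ ^ n) c ∈ Subring.center D := by
  induction n with
  | zero => simpa using hc
  | succ n ih => rw [pow_succ']; exact aux_center_map σ ((σ^n) c) ih

/-- `K n = ∏_{l<n} σˡ(k)` -/
def auxK (n : ℕ) : D := ((List.range n).map fun l => (σ ^ l) k).prod

lemma auxK_succ (n : ℕ) : auxK σ k (n + 1) = auxK σ k n * (σ ^ n) k := by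
  rw [auxK, List.range_succ, List.map_append, List.prod_append]
  simp [auxK]

lemma auxK_central (hkC : k ∈ Subring.center D) (n : ℕ) : auxK σ k n ∈ Subring.center D := by
  induction n with
  | zero => simpa [auxK] using Subring.one_mem _
  | succ n ih =>
    rw [auxK_succ]
    exact Subring.mul_mem _ ih (aux_center_pow σ n k hkC)

lemma auxK_unit (hk : IsUnit k) (n : ℕ) : IsUnit (auxK σ k n) := by
  induction n with
  | zero => simp [auxK]
  | succ n ih =>
    rw [auxK_succ]
    exact ih.mul ((hk.map (σ^n : D ≃+* D)))

lemma auxK_add (a b : ℕ) : auxK σ k (a + b) = auxK σ k a * (σ ^ a) (auxK σ k b) := by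
  rw [auxK, auxK, auxK, List.range_add, List.map_append, List.prod_append, map_list_prod]
  congr 1
  rw [List.map_map, List.map_map]
  congr 1
  apply List.map_congr_left
  intro l _
  show (σ ^ (a + l)) k = (σ ^ a) ((σ ^ l) k)
  rw [pow_add]; rfl

lemma aux_comm (τ : D ≃+* D) (hτσ : ∀ x : D, τ (σ x) = σ (τ x)) (n : ℕ) :
    ∀ x : D, τ ((σ ^ n) x) = (σ ^ n) (τ x) := by
  induction n with
  | zero => intro x; rfl
  | succ n ih =>
    intro x
    rw [pow_succ]
    show τ ((σ ^ n) (σ x)) = (σ ^ n) (σ (τ x))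
    rw [ih (σ x), hτσ]

lemma aux_id1 (A B c1 c2 : D) (h : ∀ g, c1 * g = g * c1) :
    A * c1 * (B * c2) = A * B * (c1 * c2) := by
  rw [mul_assoc A c1 (B * c2), ← mul_assoc c1 B c2, h B, mul_assoc B c1 c2,
    ← mul_assoc A B (c1 * c2)]

lemma aux_id2 (A B e c1 c2 cp cM : D) (hp : ∀ g, cp * g = g * cp)
    (hc1 : ∀ g, c1 * g = g * c1) (hprod : cM * cp = c1 * c2) :
    A * B * (cM * e) * cp = A * c1 * (B * c2) * e := by
  rw [aux_id1 A B c1 c2 hc1, mul_assoc (A*B) (cM*e) cp, mul_assoc cM e cp, ← hp e,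
    ← mul_assoc cM cp e, hprod, ← mul_assoc, mul_assoc (A*B) (c1*c2) e]

end Aux

/-- Let `D` be a ring with center `C`, `σ ∈ Aut(D)` with `σ|_C` of finite
order `m`, `S₀ = C ∩ Fix(σ)`, `C/S₀` cyclic Galois of degree `m` with group `⟨σ|_C⟩`, and
`d ∈ Dˣ`.  Let `τ ∈ Aut_{S₀}(D)` commute with `σ` and let `k ∈ Cˣ` satisfy
`τ(d) = (∏_{l<m} σˡ(k))·d`.  Then `H_{τ,k} : ∑ xᵢ tⁱ ↦ ∑ τ(xᵢ)(∏_{l<i} σˡ(k)) tⁱ` is an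
algebra automorphism of `(D,σ,d)` (additive, multiplicative and bijective) extending `τ`. -/
theorem H_tau_k_is_automorphism {D : Type*} [Ring D]
    (σ : D ≃+* D) (m : ℕ) (hGal : CenterCyclicGalois σ m)
    (d : D) (hd : IsUnit d)
    (τ : D ≃+* D) (hτσ : ∀ x : D, τ (σ x) = σ (τ x))
    (hτS0 : ∀ x ∈ Subring.center D, σ x = x → τ x = x)
    (k : D) (hkC : k ∈ Subring.center D) (hk : IsUnit k)
    (hτd : τ d = (((List.range m).map fun l => (σ ^ l) k).prod) * d)
    (H : (Fin m → D) → Fin m → D)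
    (hH : H = fun (a : Fin m → D) (i : Fin m) => τ (a i) * ((List.range (i : ℕ)).map fun l => (σ ^ l) k).prod) :
    (∀ a b : Fin m → D, H (a + b) = H a + H b) ∧
    (∀ a b : Fin m → D, H (pmul σ d m a b) = pmul σ d m (H a) (H b)) ∧
    Function.Bijective H ∧
    (∀ c : D, H (Pi.single (⟨0, hGal.1⟩ : Fin m) c) =
      Pi.single (⟨0, hGal.1⟩ : Fin m) (τ c)) := by
  subst hH
  have Kc : ∀ n, auxK σ k n ∈ Subring.center D := auxK_central σ k hkC
  have Kcm : ∀ n (g : D), auxK σ k n * g = g * auxK σ k n :=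
    fun n g => (Subring.mem_center_iff.mp (Kc n) g).symm
  have Ku : ∀ n, IsUnit (auxK σ k n) := auxK_unit σ k hk
  have hτd' : τ d = auxK σ k m * d := hτd
  refine ⟨?_, ?_, ?_, ?_⟩
  · intro a b
    funext i
    show τ ((a + b) i) * auxK σ k (i : ℕ) =
      τ (a i) * auxK σ k (i : ℕ) + τ (b i) * auxK σ k (i : ℕ)
    rw [Pi.add_apply, map_add, add_mul]
  · intro a b
    funext p
    show τ (pmul σ d m a b p) * auxK σ k (p : ℕ) =
      pmul σ d m (fun i => τ (a i) * auxK σ k (i : ℕ))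
        (fun i => τ (b i) * auxK σ k (i : ℕ)) p
    simp only [pmul]
    rw [map_sum, Finset.sum_mul]
    refine Finset.sum_congr rfl fun i _ => ?_
    rw [map_sum, Finset.sum_mul]
    refine Finset.sum_congr rfl fun j _ => ?_
    by_cases hP : (i : ℕ) + (j : ℕ) = (p : ℕ)
    · rw [if_pos hP, if_pos hP, map_mul, aux_comm σ τ hτσ, ← hP, auxK_add,
        map_mul, aux_id1 _ _ _ _ (Kcm (i : ℕ))]
    · rw [if_neg hP, if_neg hP]
      by_cases hQ : (i : ℕ) + (j : ℕ) = (p : ℕ) + m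
      · rw [if_pos hQ, if_pos hQ, map_mul, map_mul, aux_comm σ τ hτσ,
          aux_comm σ τ hτσ, hτd', map_mul, map_mul]
        exact aux_id2 _ _ _ _ _ _ _ (Kcm (p : ℕ)) (Kcm (i : ℕ))
          (by rw [← Kcm (p : ℕ), ← auxK_add, ← hQ, auxK_add])
      · rw [if_neg hQ, if_neg hQ, map_zero, zero_mul]
  · rw [Function.bijective_iff_has_inverse]
    refine ⟨fun a i => τ.symm (a i * ↑(Ku (i : ℕ)).unit⁻¹), ?_, ?_⟩
    · intro a
      funext i
      show τ.symm (τ (a i) * auxK σ k (i : ℕ) * ↑(Ku (i : ℕ)).unit⁻¹) = a i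
      rw [mul_assoc, (Ku (i : ℕ)).mul_val_inv, mul_one, RingEquiv.symm_apply_apply]
    · intro a
      funext i
      show τ (τ.symm (a i * ↑(Ku (i : ℕ)).unit⁻¹)) * auxK σ k (i : ℕ) = a i
      rw [RingEquiv.apply_symm_apply, mul_assoc, (Ku (i : ℕ)).val_inv_mul, mul_one]
  · intro c
    funext i
    beta_reduce
    by_cases h : i = (⟨0, hGal.1⟩ : Fin m)
    · subst h
      rw [Pi.single_eq_same, Pi.single_eq_same]
      simp
    · rw [Pi.single_eq_of_ne h, Pi.single_eq_of_ne h, map_zero, zero_mul]
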